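/- For all real numbers 0 < a ≤ b, the integral ∫_a^b [ (1 - a³/b³)² - (1 - a³/r³)² ] · r⁴ dr is at most a³ · b². -/

import Mathlib

theorem stmt_3 (a b : ℝ) (ha : 0 < a) (hab : a ≤ b) :
    ∫ r in a..b, ((1 - a ^ 3 / b ^ 3) ^ 2 - (1 - a ^ 3 / r ^ 3) ^ 2) * r ^ 4
      ≤ a ^ 3 * b ^ 2 := by
  have hb : 0 < b := lt_of_lt_of_le ha hab
  have key : ∫ r in a..b, ((1 - a ^ 3 / b ^ 3) ^ 2 - (1 - a ^ 3 / r ^ 3) ^ 2) * r ^ 4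
      ≤ ∫ r in a..b, 2 * a ^ 3 * r := by
    apply intervalIntegral.integral_mono_on hab
    · apply ContinuousOn.intervalIntegrable
      apply ContinuousOn.mul
      · apply ContinuousOn.sub continuousOn_const
        apply ContinuousOn.pow
        apply ContinuousOn.sub continuousOn_const
        apply ContinuousOn.div continuousOn_const (by fun_prop)
        intro x hx
        rw [Set.uIcc_of_le hab] at hx
        have : 0 < x := lt_of_lt_of_le ha hx.1
        positivity
      · fun_prop
    · apply ContinuousOn.intervalIntegrable; fun_prop
    · intro r hr
      obtain ⟨hr1, hr2⟩ := hr
      have hr0 : 0 < r := lt_of_lt_of_le ha hr1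
      set x := a ^ 3 / r ^ 3 with hx
      set y := a ^ 3 / b ^ 3 with hy
      have hyx : y ≤ x := by
        apply div_le_div_of_nonneg_left (by positivity) (by positivity)
        exact pow_le_pow_left₀ (le_of_lt hr0) hr2 3
      have hx1 : x ≤ 1 := by
        rw [hx, div_le_one (by positivity)]
        exact pow_le_pow_left₀ ha.le hr1 3
      have hy0 : 0 ≤ y := by positivity
      have hpt : (1 - y) ^ 2 - (1 - x) ^ 2 ≤ 2 * x := by nlinarith
      have : ((1 - y) ^ 2 - (1 - x) ^ 2) * r ^ 4 ≤ 2 * x * r ^ 4 := by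
        apply mul_le_mul_of_nonneg_right hpt (by positivity)
      calc ((1 - y) ^ 2 - (1 - x) ^ 2) * r ^ 4 ≤ 2 * x * r ^ 4 := this
        _ = 2 * a ^ 3 * r := by rw [hx]; field_simp
  have : ∫ r in a..b, 2 * a ^ 3 * r = a ^ 3 * (b ^ 2 - a ^ 2) := by
    rw [intervalIntegral.integral_const_mul, integral_id]
    ring
  rw [this] at key
  nlinarith [sq_nonneg a, pow_pos ha 3]
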